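/- A graph G has a δ-Partitionable fractional perfect matching if and only if E contains a collection of δ nonempty, pairwise vertex-disjoint edge sets E_1, …, E_δ such that (1) ⋃_{j∈[δ]} E_j is an edge cover of G, and (2) for each j ∈ [δ]: (i) every connected component of the subgraph with edge set E_j (after deleting isolated vertices) is either a single edge or an odd cycle, and (ii) |V(E_j)| = |V|/δ. -/

import Mathlib

open Finset
open scoped Classical
set_option linter.unusedSectionVars false
set_option maxHeartbeats 1000000

variable {V : Type*} [Fintype V] [DecidableEq V]

/-- The sum of `f` over the edges (elements of `Sym2 V`) containing the vertex `v`. -/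
noncomputable def fracDeg (f : Sym2 V → ℝ) (v : V) : ℝ :=
  ∑ e ∈ Finset.univ.filter (fun e : Sym2 V => v ∈ e), f e

/-- `f` is a fractional matching of `G`. -/
def IsFracMatching (G : SimpleGraph V) (f : Sym2 V → ℝ) : Prop :=
  (∀ e, 0 ≤ f e ∧ f e ≤ 1) ∧ (∀ e, e ∉ G.edgeSet → f e = 0) ∧ ∀ v, fracDeg f v ≤ 1

/-- `f` is a fractional perfect matching of `G`. -/
def IsFPM (G : SimpleGraph V) (f : Sym2 V → ℝ) : Prop :=
  (∀ e, 0 ≤ f e ∧ f e ≤ 1) ∧ (∀ e, e ∉ G.edgeSet → f e = 0) ∧ ∀ v, fracDeg f v = 1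

/-- `E(f)`: the set of edges with positive weight. -/
noncomputable def fSupp (f : Sym2 V → ℝ) : Finset (Sym2 V) :=
  Finset.univ.filter (fun e => 0 < f e)

/-- Number of edges of `F` containing `v` (the degree of `v` in the subgraph with edge set `F`). -/
noncomputable def edgeDeg (F : Finset (Sym2 V)) (v : V) : ℕ :=
  (F.filter (fun e => v ∈ e)).card

/-- The set of vertices incident to some edge of `F`. -/
noncomputable def vertSet (F : Finset (Sym2 V)) : Finset V :=
  Finset.univ.filter (fun v => ∃ e ∈ F, v ∈ e)

/-- Two edge-weight functions are equivalent: same incident sums at every vertex. -/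
def Equiv' (f f' : Sym2 V → ℝ) : Prop := ∀ v : V, fracDeg f v = fracDeg f' v

/-- `F` consists of a single edge. -/
def IsSingleEdge (F : Finset (Sym2 V)) : Prop := ∃ e : Sym2 V, F = {e}

/-- `F` is the edge set of an odd cycle. -/
def IsOddCycleSet (F : Finset (Sym2 V)) : Prop :=
  ∃ (v : V) (c : (SimpleGraph.fromEdgeSet (↑F : Set (Sym2 V))).Walk v v),
    c.IsCycle ∧ Odd c.length ∧ c.edges.toFinset = F

/-- Two edge sets are vertex-disjoint. -/
def VDisj (F F' : Finset (Sym2 V)) : Prop :=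
  ∀ v : V, (∃ e ∈ F, v ∈ e) → ¬ ∃ e ∈ F', v ∈ e

/-- Every connected component of the subgraph with edge set `F` (ignoring isolated
vertices) is either a single edge or an odd cycle, expressed via a partition of `F`
into pairwise vertex-disjoint such pieces. -/
def EdgesAndOddCycles (F : Finset (Sym2 V)) : Prop :=
  ∃ P : Finset (Finset (Sym2 V)),
    (∀ A ∈ P, IsSingleEdge A ∨ IsOddCycleSet A) ∧
    (∀ A ∈ P, ∀ B ∈ P, A ≠ B → VDisj A B) ∧
    P.biUnion id = F

/-- The family `P` witnesses that `f` is a `δ`-Partitionable fractional perfect matching. -/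
def IsPartitionWitness (f : Sym2 V → ℝ) (δ : ℕ) (P : Fin δ → Finset (Sym2 V)) : Prop :=
  (∀ j, (P j).Nonempty) ∧
  (∀ j k, j ≠ k → VDisj (P j) (P k)) ∧
  (∀ j, P j ⊆ fSupp f) ∧
  (∀ e ∈ fSupp f, ∃ j, e ∈ P j) ∧
  ∀ j, ∑ e ∈ P j, f e = (Fintype.card V : ℝ) / (2 * δ)

/-- `f` is `δ`-Partitionable. -/
def IsDeltaPartitionable (f : Sym2 V → ℝ) (δ : ℕ) : Prop :=
  ∃ P : Fin δ → Finset (Sym2 V), IsPartitionWitness f δ P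

section Aux

/-- incidence vector of an edge -/
noncomputable def incVec (e : Sym2 V) : V → ℝ := fun v => if v ∈ e then 1 else 0

lemma mem_vertSet {F : Finset (Sym2 V)} {v : V} : v ∈ vertSet F ↔ ∃ e ∈ F, v ∈ e := by
  simp [vertSet]

lemma vertSet_mono {F F' : Finset (Sym2 V)} (h : F ⊆ F') : vertSet F ⊆ vertSet F' := by
  intro v hv
  rcases mem_vertSet.1 hv with ⟨e, he, hve⟩
  exact mem_vertSet.2 ⟨e, h he, hve⟩

lemma filter_mem_card {S : Finset V} {e : Sym2 V} (hd : ¬ e.IsDiag) (hS : ∀ v ∈ e, v ∈ S) :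
    (S.filter (fun v => v ∈ e)).card = 2 := by
  induction e with
  | _ a b =>
    have hab : a ≠ b := by simpa using hd
    have : S.filter (fun v => v ∈ s(a,b)) = {a, b} := by
      ext v
      simp only [Finset.mem_filter, Sym2.mem_iff, Finset.mem_insert, Finset.mem_singleton]
      constructor
      · rintro ⟨-, h⟩; exact h
      · rintro (rfl | rfl)
        · exact ⟨hS v (by simp), Or.inl rfl⟩
        · exact ⟨hS v (by simp), Or.inr rfl⟩
    rw [this, Finset.card_insert_of_notMem (by simpa using hab), Finset.card_singleton]

lemma handshake_real {S : Finset V} {f : Sym2 V → ℝ}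
    (h : ∀ e : Sym2 V, f e ≠ 0 → ¬ e.IsDiag ∧ ∀ v ∈ e, v ∈ S) :
    ∑ v ∈ S, fracDeg f v = 2 * ∑ e : Sym2 V, f e := by
  have h1 : ∀ v, fracDeg f v = ∑ e : Sym2 V, if v ∈ e then f e else 0 := fun v => by
    rw [fracDeg, Finset.sum_filter]
  calc ∑ v ∈ S, fracDeg f v = ∑ e : Sym2 V, ∑ v ∈ S, (if v ∈ e then f e else 0) := by
        simp_rw [h1]; rw [Finset.sum_comm]
    _ = ∑ e : Sym2 V, 2 * f e := by
        refine Finset.sum_congr rfl fun e _ => ?_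
        by_cases hf : f e = 0
        · simp [hf]
        · obtain ⟨hd, hS⟩ := h e hf
          rw [← Finset.sum_filter, Finset.sum_const, filter_mem_card hd hS]
          simp [mul_comm]
    _ = 2 * ∑ e : Sym2 V, f e := by rw [Finset.mul_sum]

lemma handshake_nat {F : Finset (Sym2 V)} (hd : ∀ e ∈ F, ¬ e.IsDiag) :
    ∑ v ∈ vertSet F, edgeDeg F v = 2 * F.card := by
  have h1 : ∀ v, edgeDeg F v = ∑ e ∈ F, if v ∈ e then 1 else 0 := fun v => by
    rw [edgeDeg, Finset.card_filter]
  calc ∑ v ∈ vertSet F, edgeDeg F v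
      = ∑ e ∈ F, ∑ v ∈ vertSet F, (if v ∈ e then 1 else 0) := by
        simp_rw [h1]; rw [Finset.sum_comm]
    _ = ∑ e ∈ F, 2 := by
        refine Finset.sum_congr rfl fun e he => ?_
        rw [← Finset.sum_filter, Finset.sum_const,
          filter_mem_card (hd e he) (fun v hv => mem_vertSet.2 ⟨e, he, hv⟩)]
        simp
    _ = 2 * F.card := by rw [Finset.sum_const, smul_eq_mul, mul_comm]

lemma fracDeg_eq_sum_incVec (f : Sym2 V → ℝ) (v : V) :
    fracDeg f v = ∑ e : Sym2 V, f e * incVec e v := by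
  rw [fracDeg, Finset.sum_filter]
  refine Finset.sum_congr rfl fun e _ => ?_
  by_cases h : v ∈ e <;> simp [incVec, h]

end Aux

section Walks

open SimpleGraph

lemma not_mem_edge_of_not_mem_support {G : SimpleGraph V} {u w a : V} {q : G.Walk u w}
    (ha : a ∉ q.support) {e : Sym2 V} (he : e ∈ q.edges) : a ∉ e := by
  intro hae
  rcases Sym2.mem_iff_exists.1 hae with ⟨b, rfl⟩
  exact ha (q.fst_mem_support_of_mem_edges he)

lemma edgeDeg_insert_le (A : Finset (Sym2 V)) (e : Sym2 V) (v : V) :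
    edgeDeg (insert e A) v ≤ edgeDeg A v + 1 := by
  unfold edgeDeg
  rw [Finset.filter_insert]
  split
  · exact Finset.card_insert_le _ _
  · exact Nat.le_succ_of_le le_rfl

lemma edgeDeg_insert_of_not_mem {A : Finset (Sym2 V)} {e : Sym2 V} {v : V} (h : v ∉ e) :
    edgeDeg (insert e A) v = edgeDeg A v := by
  unfold edgeDeg
  rw [Finset.filter_insert, if_neg h]

lemma path_edgeDeg {G : SimpleGraph V} {u w : V} (p : G.Walk u w) (hp : p.IsPath) :
    (∀ v, edgeDeg p.edges.toFinset v ≤ 2) ∧ edgeDeg p.edges.toFinset u ≤ 1 := by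
  induction p with
  | nil => simp [edgeDeg]
  | @cons a b c h q ih =>
    rw [SimpleGraph.Walk.cons_isPath_iff] at hp
    obtain ⟨hq, hna⟩ := hp
    obtain ⟨ih2, ih1⟩ := ih hq
    have hdega : edgeDeg q.edges.toFinset a = 0 := by
      unfold edgeDeg
      rw [Finset.card_eq_zero, Finset.filter_eq_empty_iff]
      intro e he
      exact not_mem_edge_of_not_mem_support hna (List.mem_toFinset.1 he)
    constructor
    · intro v
      simp only [SimpleGraph.Walk.edges_cons, List.toFinset_cons]
      by_cases hv : v ∈ s(a, b)
      · rcases Sym2.mem_iff.1 hv with rfl | rfl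
        · calc edgeDeg (insert s(v,b) q.edges.toFinset) v
              ≤ edgeDeg q.edges.toFinset v + 1 := edgeDeg_insert_le _ _ _
            _ ≤ 2 := by omega
        · calc edgeDeg (insert s(a,v) q.edges.toFinset) v
              ≤ edgeDeg q.edges.toFinset v + 1 := edgeDeg_insert_le _ _ _
            _ ≤ 2 := by omega
      · rw [edgeDeg_insert_of_not_mem hv]; exact ih2 v
    · simp only [SimpleGraph.Walk.edges_cons, List.toFinset_cons]
      calc edgeDeg (insert s(a,b) q.edges.toFinset) a
          ≤ edgeDeg q.edges.toFinset a + 1 := edgeDeg_insert_le _ _ _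
        _ ≤ 1 := by omega

lemma cycle_edgeDeg_le {G : SimpleGraph V} {u : V} (c : G.Walk u u) (hc : c.IsCycle) :
    ∀ v, edgeDeg c.edges.toFinset v ≤ 2 := by
  cases c with
  | nil => simp [edgeDeg]
  | @cons _ b _ h q =>
    rw [SimpleGraph.Walk.cons_isCycle_iff] at hc
    obtain ⟨hq, hne⟩ := hc
    have hrev : q.reverse.edges.toFinset = q.edges.toFinset := by
      rw [SimpleGraph.Walk.edges_reverse]
      ext e; simp
    have hu : edgeDeg q.edges.toFinset b ≤ 1 := (path_edgeDeg q hq).2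
    have hur : edgeDeg q.edges.toFinset u ≤ 1 := by
      have := (path_edgeDeg q.reverse hq.reverse).2
      rwa [hrev] at this
    have hall : ∀ v, edgeDeg q.edges.toFinset v ≤ 2 := (path_edgeDeg q hq).1
    intro v
    simp only [SimpleGraph.Walk.edges_cons, List.toFinset_cons]
    by_cases hv : v ∈ s(u, b)
    · rcases Sym2.mem_iff.1 hv with rfl | rfl
      · calc edgeDeg (insert s(v,b) q.edges.toFinset) v
            ≤ edgeDeg q.edges.toFinset v + 1 := edgeDeg_insert_le _ _ _
          _ ≤ 2 := by omega
      · calc edgeDeg (insert s(u,v) q.edges.toFinset) v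
            ≤ edgeDeg q.edges.toFinset v + 1 := edgeDeg_insert_le _ _ _
          _ ≤ 2 := by omega
    · rw [edgeDeg_insert_of_not_mem hv]; exact hall v

end Walks

section CycleStruct

lemma edges_not_diag {G : SimpleGraph V} {u w : V} (p : G.Walk u w) :
    ∀ e ∈ p.edges.toFinset, ¬ e.IsDiag := by
  intro e he
  have := p.edges_subset_edgeSet (List.mem_toFinset.1 he)
  exact SimpleGraph.not_isDiag_of_mem_edgeSet _ this

lemma mem_support_of_mem_edges' {G : SimpleGraph V} {u w v : V} {p : G.Walk u w}
    {e : Sym2 V} (he : e ∈ p.edges) (hv : v ∈ e) : v ∈ p.support := by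
  rcases Sym2.mem_iff_exists.1 hv with ⟨b, rfl⟩
  exact p.fst_mem_support_of_mem_edges he

lemma cycle_struct {G : SimpleGraph V} {u : V} (c : G.Walk u u) (hc : c.IsCycle) :
    c.edges.toFinset.card = c.length ∧
    (vertSet c.edges.toFinset).card = c.length ∧
    (∀ v ∈ vertSet c.edges.toFinset, edgeDeg c.edges.toFinset v = 2) := by
  have hnodup : c.edges.Nodup := hc.edges_nodup
  have hcard : c.edges.toFinset.card = c.length := by
    rw [List.toFinset_card_of_nodup hnodup, SimpleGraph.Walk.length_edges]
  have hlen3 : 3 ≤ c.length := hc.three_le_length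
  -- u is in the tail of the support
  have hu_tail : u ∈ c.support.tail := by
    cases c with
    | nil => exact absurd rfl hc.ne_nil
    | cons h q => simpa using q.end_mem_support
  have hsub : vertSet c.edges.toFinset ⊆ c.support.tail.toFinset := by
    intro v hv
    rcases mem_vertSet.1 hv with ⟨e, he, hve⟩
    have hvs : v ∈ c.support := mem_support_of_mem_edges' (List.mem_toFinset.1 he) hve
    rw [c.support_eq_cons] at hvs
    rcases List.mem_cons.1 hvs with rfl | h
    · exact List.mem_toFinset.2 hu_tail
    · exact List.mem_toFinset.2 h
  have hvcard : (vertSet c.edges.toFinset).card ≤ c.length := by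
    calc (vertSet c.edges.toFinset).card ≤ c.support.tail.toFinset.card :=
          Finset.card_le_card hsub
      _ ≤ c.support.tail.length := c.support.tail.toFinset_card_le
      _ = c.length := by
          have h2 := c.length_support
          rw [c.support_eq_cons] at h2
          simp only [List.length_cons] at h2
          omega
  have hhs : ∑ v ∈ vertSet c.edges.toFinset, edgeDeg c.edges.toFinset v
      = 2 * c.length := by
    rw [handshake_nat (edges_not_diag c), hcard]
  have hle : ∀ v ∈ vertSet c.edges.toFinset, edgeDeg c.edges.toFinset v ≤ 2 :=
    fun v _ => cycle_edgeDeg_le c hc v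
  have hsumle : 2 * c.length ≤ 2 * (vertSet c.edges.toFinset).card := by
    calc 2 * c.length = ∑ v ∈ vertSet c.edges.toFinset, edgeDeg c.edges.toFinset v := hhs.symm
      _ ≤ ∑ _v ∈ vertSet c.edges.toFinset, 2 := Finset.sum_le_sum hle
      _ = 2 * (vertSet c.edges.toFinset).card := by
          rw [Finset.sum_const, smul_eq_mul, mul_comm]
  have hveq : (vertSet c.edges.toFinset).card = c.length := by omega
  refine ⟨hcard, hveq, ?_⟩
  by_contra hcon
  push_neg at hcon
  obtain ⟨v₀, hv₀, hne⟩ := hcon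
  have hlt : edgeDeg c.edges.toFinset v₀ < 2 := lt_of_le_of_ne (hle v₀ hv₀) hne
  have : ∑ v ∈ vertSet c.edges.toFinset, edgeDeg c.edges.toFinset v
      < ∑ _v ∈ vertSet c.edges.toFinset, 2 :=
    Finset.sum_lt_sum hle ⟨v₀, hv₀, hlt⟩
  rw [hhs, Finset.sum_const, smul_eq_mul, mul_comm] at this
  omega

end CycleStruct

section AltSum

noncomputable def altSum {G : SimpleGraph V} : {u w : V} → G.Walk u w → V → ℝ
  | _, _, SimpleGraph.Walk.nil, _ => 0
  | _, _, SimpleGraph.Walk.cons (u := a) (v := b) _ q, v => incVec s(a, b) v - altSum q v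

lemma incVec_eval {a b v : V} (h : a ≠ b) :
    incVec s(a,b) v = (if v = a then (1:ℝ) else 0) + (if v = b then 1 else 0) := by
  unfold incVec
  by_cases hva : v = a
  · subst hva; simp [Sym2.mem_iff, h]
  · by_cases hvb : v = b
    · subst hvb; simp [Sym2.mem_iff, hva]
    · simp [Sym2.mem_iff, hva, hvb]

lemma altSum_eval {G : SimpleGraph V} {u w : V} (p : G.Walk u w) (v : V) :
    altSum p v = (if v = u then (1:ℝ) else 0) - (-1:ℝ)^p.length * (if v = w then 1 else 0) := by
  induction p with
  | nil => simp [altSum]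
  | @cons a b c h q ih =>
    show incVec s(a, b) v - altSum q v = _
    rw [incVec_eval h.ne, ih]
    rw [SimpleGraph.Walk.length_cons, pow_succ]
    ring

lemma altSum_coeffs {G : SimpleGraph V} {u w : V} (p : G.Walk u w) (hnd : p.edges.Nodup) :
    ∃ g : Sym2 V → ℝ, (∀ e ∈ p.edges.toFinset, g e ≠ 0) ∧
      ∀ v, ∑ e ∈ p.edges.toFinset, g e * incVec e v = altSum p v := by
  induction p with
  | nil => exact ⟨fun _ => 0, by simp, by simp [altSum]⟩
  | @cons a b c h q ih =>
    rw [SimpleGraph.Walk.edges_cons, List.nodup_cons] at hnd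
    obtain ⟨hnotin, hnd'⟩ := hnd
    obtain ⟨g, hg0, hgsum⟩ := ih hnd'
    set g' : Sym2 V → ℝ := fun e => if e = s(a,b) then 1 else -g e with hg'
    have hval : ∀ e ∈ q.edges.toFinset, g' e = -g e := by
      intro e he
      simp only [hg']
      rw [if_neg]
      rintro rfl; exact hnotin (List.mem_toFinset.1 he)
    have hself : g' s(a,b) = 1 := by simp [hg']
    refine ⟨g', ?_, ?_⟩
    · intro e he
      rw [SimpleGraph.Walk.edges_cons, List.toFinset_cons, Finset.mem_insert] at he
      rcases he with rfl | he
      · rw [hself]; norm_num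
      · rw [hval e he, neg_ne_zero]
        exact hg0 e he
    · intro v
      rw [SimpleGraph.Walk.edges_cons, List.toFinset_cons,
        Finset.sum_insert (by simpa using hnotin)]
      show _ = incVec s(a, b) v - altSum q v
      rw [hself, one_mul, ← hgsum v]
      have : ∑ e ∈ q.edges.toFinset, g' e * incVec e v
          = -∑ e ∈ q.edges.toFinset, g e * incVec e v := by
        rw [← Finset.sum_neg_distrib]
        refine Finset.sum_congr rfl fun e he => ?_
        rw [hval e he, neg_mul]
      rw [this]
      ring

lemma cycle_odd_of_linearIndependent {F : Finset (Sym2 V)}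
    (hind : LinearIndependent ℝ (fun e : {x // x ∈ F} => incVec (e : Sym2 V)))
    {G : SimpleGraph V} {u : V} (c : G.Walk u u) (hc : c.IsCycle)
    (hsub : c.edges.toFinset ⊆ F) : Odd c.length := by
  rw [← Nat.not_even_iff_odd]  -- deprecated ok
  intro heven
  obtain ⟨g, hg0, hgsum⟩ := altSum_coeffs c hc.edges_nodup
  have hz : ∀ v, altSum c v = 0 := by
    intro v
    rw [altSum_eval, heven.neg_one_pow, one_mul, sub_self]
  set A := c.edges.toFinset with hA
  set gh : {x // x ∈ F} → ℝ := fun i => if (i : Sym2 V) ∈ A then g i else 0 with hgh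
  have hsum0 : ∑ i, gh i • incVec (i : Sym2 V) = 0 := by
    funext v
    rw [Finset.sum_apply, Pi.zero_apply]
    have h1 : ∑ i : {x // x ∈ F}, (gh i • incVec (i : Sym2 V)) v
        = ∑ e ∈ F, (if e ∈ A then g e else 0) * incVec e v := by
      rw [← Finset.sum_coe_sort F (fun e => (if e ∈ A then g e else 0) * incVec e v)]
      rfl
    have h2 : ∀ e ∈ F, (if e ∈ A then g e else 0) * incVec e v
        = if e ∈ A then g e * incVec e v else 0 := by
      intro e _; split <;> simp
    rw [h1, Finset.sum_congr rfl h2, ← Finset.sum_filter, Finset.filter_mem_eq_inter,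
      Finset.inter_eq_right.2 hsub, hgsum v, hz v]
  have hall := (Fintype.linearIndependent_iff.1 hind) gh hsum0
  have hne : c.edges ≠ [] := by
    intro h
    have := hc.three_le_length
    rw [← SimpleGraph.Walk.length_edges, h] at this
    simp at this
  obtain ⟨e, he⟩ := List.exists_mem_of_ne_nil _ hne
  have heA : e ∈ A := List.mem_toFinset.2 he
  have := hall ⟨e, hsub heA⟩
  rw [hgh] at this
  simp only [heA, if_pos] at this
  exact hg0 e heA this

end AltSum

section LinAlg

lemma card_le_vertSet_of_linearIndependent {F F₂ : Finset (Sym2 V)} (hsub : F₂ ⊆ F)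
    (hind : LinearIndependent ℝ (fun e : {x // x ∈ F} => incVec (e : Sym2 V))) :
    F₂.card ≤ (vertSet F₂).card := by
  classical
  set S := vertSet F₂ with hS
  set w : {e // e ∈ F₂} → ({v // v ∈ S} → ℝ) := fun e v => incVec (e : Sym2 V) (v : V) with hw
  have hindw : LinearIndependent ℝ w := by
    rw [Fintype.linearIndependent_iff]
    intro g hg
    set gh : {x // x ∈ F} → ℝ := fun i => if h : (i : Sym2 V) ∈ F₂ then g ⟨i, h⟩ else 0 with hgh
    have hkey : ∀ v : V, ∑ e ∈ F₂, (if h : e ∈ F₂ then g ⟨e, h⟩ else 0) * incVec e v = 0 := by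
      intro v
      by_cases hv : v ∈ S
      · have h0 := congrFun hg ⟨v, hv⟩
        rw [Finset.sum_apply, Pi.zero_apply] at h0
        have h2 : ∑ i : {e // e ∈ F₂},
            (if h : (i : Sym2 V) ∈ F₂ then g ⟨i, h⟩ else 0) * incVec (i : Sym2 V) v
            = ∑ c : {e // e ∈ F₂}, (g c • w c) ⟨v, hv⟩ := by
          refine Finset.sum_congr rfl fun i _ => ?_
          rw [dif_pos i.2]
          rfl
        rw [← Finset.sum_coe_sort F₂
          (fun e => (if h : e ∈ F₂ then g ⟨e, h⟩ else 0) * incVec e v), h2, h0]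
      · refine Finset.sum_eq_zero fun e he => ?_
        have : incVec e v = 0 := by
          unfold incVec
          rw [if_neg]
          intro hve
          exact hv (mem_vertSet.2 ⟨e, he, hve⟩)
        rw [this, mul_zero]
    have hsum0 : ∑ i, gh i • incVec (i : Sym2 V) = 0 := by
      funext v
      rw [Finset.sum_apply, Pi.zero_apply]
      have h1 : ∑ i : {x // x ∈ F}, (gh i • incVec (i : Sym2 V)) v
          = ∑ e ∈ F, (if h : e ∈ F₂ then g ⟨e, h⟩ else 0) * incVec e v := by
        rw [← Finset.sum_coe_sort F
          (fun e => (if h : e ∈ F₂ then g ⟨e, h⟩ else 0) * incVec e v)]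
        rfl
      rw [h1, ← Finset.sum_subset hsub, hkey v]
      intro e _ he2
      rw [dif_neg he2, zero_mul]
    have hall := (Fintype.linearIndependent_iff.1 hind) gh hsum0
    intro i
    have := hall ⟨(i : Sym2 V), hsub i.2⟩
    rw [hgh] at this
    simpa [i.2] using this
  have hcard := hindw.fintype_card_le_finrank
  rwa [Module.finrank_fintype_fun_eq_card, Fintype.card_coe, Fintype.card_coe] at hcard

end LinAlg

section MaxPath

lemma exists_max_path {G : SimpleGraph V} (hne : ∃ a b, G.Adj a b) :
    ∃ (u w : V) (p : G.Walk u w), p.IsPath ∧ 1 ≤ p.length ∧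
      ∀ (u' w' : V) (q : G.Walk u' w'), q.IsPath → q.length ≤ p.length := by
  classical
  obtain ⟨a, b, hab⟩ := hne
  have : Nonempty V := ⟨a⟩
  set P : ℕ → Prop := fun n => ∃ (u w : V) (p : G.Walk u w), p.IsPath ∧ p.length = n with hP
  have hP1 : P 1 := by
    refine ⟨a, b, SimpleGraph.Walk.cons hab SimpleGraph.Walk.nil, ?_, rfl⟩
    simp [hab.ne]
  have hbound : ∀ n, P n → n < Fintype.card V := by
    rintro n ⟨u, w, p, hp, rfl⟩
    exact hp.length_lt
  have h1card : 1 ≤ Fintype.card V := Fintype.card_pos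
  set n := Nat.findGreatest P (Fintype.card V) with hn
  have h1n : 1 ≤ n := Nat.le_findGreatest h1card hP1
  have hPn : P n := Nat.findGreatest_spec h1card hP1
  obtain ⟨u, w, p, hp, hplen⟩ := hPn
  refine ⟨u, w, p, hp, by omega, ?_⟩
  intro u' w' q hq
  by_contra hgt
  push_neg at hgt
  rw [hplen] at hgt
  have hPq : P q.length := ⟨u', w', q, hq, rfl⟩
  exact Nat.findGreatest_is_greatest hgt (le_of_lt (hbound _ hPq)) hPq

end MaxPath

section CycleDecomp

/-- `A` is the edge set of a cycle (any parity). -/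
def IsCycleSet (A : Finset (Sym2 V)) : Prop :=
  ∃ (v : V) (c : (SimpleGraph.fromEdgeSet (↑A : Set (Sym2 V))).Walk v v),
    c.IsCycle ∧ c.edges.toFinset = A

lemma exists_first_edge {G : SimpleGraph V} {u w : V} (p : G.Walk u w) (h : 1 ≤ p.length) :
    ∃ y, G.Adj u y ∧ s(u, y) ∈ p.edges := by
  cases p with
  | nil => simp at h
  | @cons _ b _ hadj q => exact ⟨b, hadj, by simp⟩

lemma exists_last_edge {G : SimpleGraph V} {u w : V} (p : G.Walk u w) (h : 1 ≤ p.length) :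
    ∃ y, G.Adj w y ∧ s(w, y) ∈ p.edges := by
  obtain ⟨y, hy, he⟩ := exists_first_edge p.reverse (by rwa [SimpleGraph.Walk.length_reverse])
  refine ⟨y, hy, ?_⟩
  rwa [SimpleGraph.Walk.edges_reverse, List.mem_reverse] at he

lemma path_edgeDeg_end {G : SimpleGraph V} {u w : V} (p : G.Walk u w) (hp : p.IsPath) :
    edgeDeg p.edges.toFinset w ≤ 1 := by
  have h := (path_edgeDeg p.reverse hp.reverse).2
  have heq : p.reverse.edges.toFinset = p.edges.toFinset := by
    rw [SimpleGraph.Walk.edges_reverse]; ext e; simp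
  rwa [heq] at h

lemma internal_two_edges {G : SimpleGraph V} {u w x : V} (p : G.Walk u w) (hp : p.IsPath)
    (hx : x ∈ p.support) (hxu : x ≠ u) (hxw : x ≠ w) :
    ∃ e₁ ∈ p.edges, ∃ e₂ ∈ p.edges, e₁ ≠ e₂ ∧ x ∈ e₁ ∧ x ∈ e₂ := by
  set p₁ := p.takeUntil x hx with hp₁
  set p₂ := p.dropUntil x hx with hp₂
  have hspec : p₁.append p₂ = p := p.take_spec hx
  have hlen₁ : 1 ≤ p₁.length := by
    rcases Nat.eq_zero_or_pos p₁.length with h | h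
    · exact absurd (SimpleGraph.Walk.eq_of_length_eq_zero h) hxu.symm
    · exact h
  have hlen₂ : 1 ≤ p₂.length := by
    rcases Nat.eq_zero_or_pos p₂.length with h | h
    · exact absurd (SimpleGraph.Walk.eq_of_length_eq_zero h) hxw
    · exact h
  obtain ⟨y₁, _, he₁⟩ := exists_last_edge p₁ hlen₁
  obtain ⟨y₂, _, he₂⟩ := exists_first_edge p₂ hlen₂
  have hedges : p₁.edges ++ p₂.edges = p.edges := by
    rw [← SimpleGraph.Walk.edges_append, hspec]
  have hnd : (p₁.edges ++ p₂.edges).Nodup := by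
    rw [hedges]; exact hp.edges_nodup
  have hdisj : p₁.edges.Disjoint p₂.edges := List.disjoint_of_nodup_append hnd
  refine ⟨s(x, y₁), ?_, s(x, y₂), ?_, ?_, by simp, by simp⟩
  · rw [← hedges]; exact List.mem_append_left _ he₁
  · rw [← hedges]; exact List.mem_append_right _ he₂
  · intro heq
    rw [heq] at he₁
    exact hdisj he₁ he₂

lemma cycleDecomp : ∀ (n : ℕ) (F : Finset (Sym2 V)), F.card ≤ n →
    (∀ e ∈ F, ¬ e.IsDiag) →
    (∀ v ∈ vertSet F, edgeDeg F v = 2) →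
    ∃ Q : Finset (Finset (Sym2 V)),
      (∀ A ∈ Q, A.Nonempty ∧ A ⊆ F ∧ IsCycleSet A) ∧
      (∀ A ∈ Q, ∀ B ∈ Q, A ≠ B → VDisj A B) ∧
      Q.biUnion id = F := by
  intro n
  induction n with
  | zero =>
    intro F hcard _ _
    have : F = ∅ := Finset.card_eq_zero.1 (Nat.le_zero.1 hcard)
    subst this
    exact ⟨∅, by simp, by simp, by simp⟩
  | succ n ih =>
    intro F hcard hdiag hdeg
    by_cases hF : F = ∅
    · subst hF; exact ⟨∅, by simp, by simp, by simp⟩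
    set H := SimpleGraph.fromEdgeSet (↑F : Set (Sym2 V)) with hH
    have hHadj : ∀ {a b : V}, s(a,b) ∈ F → a ≠ b → H.Adj a b := by
      intro a b h1 h2
      rw [hH, SimpleGraph.fromEdgeSet_adj]
      exact ⟨by simpa using h1, h2⟩
    have hedge_mem : ∀ {e : Sym2 V}, e ∈ H.edgeSet → e ∈ F := by
      intro e he
      rw [hH, SimpleGraph.edgeSet_fromEdgeSet] at he
      simpa using he.1
    obtain ⟨e₀, he₀⟩ := Finset.nonempty_iff_ne_empty.2 hF
    have hadj : ∃ a b, H.Adj a b := by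
      have key := Sym2.inductionOn
        (f := fun e => e ∈ F → ¬e.IsDiag → ∃ a b, H.Adj a b) e₀
        (fun x y hxy hd => ⟨x, y, hHadj hxy (by simpa using hd)⟩)
      exact key he₀ (hdiag _ he₀)
    obtain ⟨u, w, p, hp, hplen, hpmax⟩ := exists_max_path hadj
    -- last edge of p
    obtain ⟨y, hwy, hwy_mem⟩ := exists_last_edge p hplen
    have hwyF : s(w, y) ∈ F := hedge_mem (p.edges_subset_edgeSet hwy_mem)
    have hwvert : w ∈ vertSet F := mem_vertSet.2 ⟨s(w,y), hwyF, by simp⟩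
    have hdegw : edgeDeg F w = 2 := hdeg w hwvert
    -- second edge at w
    have h2 : 1 < (F.filter (fun e => w ∈ e)).card := by
      rw [show (F.filter (fun e => w ∈ e)).card = edgeDeg F w from rfl, hdegw]; omega
    obtain ⟨e', he'mem, he'ne⟩ := Finset.exists_mem_ne h2 s(w, y)
    rw [Finset.mem_filter] at he'mem
    obtain ⟨he'F, hwe'⟩ := he'mem
    obtain ⟨x, rfl⟩ := Sym2.mem_iff_exists.1 hwe'
    have hwx : w ≠ x := by
      intro h
      exact hdiag _ he'F (by simp [← h])
    -- e' is not an edge of p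
    have he'notp : s(w, x) ∉ p.edges := by
      intro hmem
      have hge2 : 1 < (p.edges.toFinset.filter (fun e => w ∈ e)).card := by
        apply Finset.one_lt_card.2
        refine ⟨s(w,y), ?_, s(w,x), ?_, he'ne.symm⟩ <;>
          simp [List.mem_toFinset, hwy_mem, hmem]
      have := path_edgeDeg_end p hp
      rw [show edgeDeg p.edges.toFinset w = (p.edges.toFinset.filter (fun e => w ∈ e)).card from rfl] at this
      omega
    -- x is on the path
    have hxsupp : x ∈ p.support := by
      by_contra hxs
      have hadjxw : H.Adj x w := (hHadj he'F hwx).symm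
      have hqpath : (SimpleGraph.Walk.cons hadjxw p.reverse).IsPath := by
        rw [SimpleGraph.Walk.cons_isPath_iff]
        refine ⟨hp.reverse, ?_⟩
        rwa [SimpleGraph.Walk.support_reverse, List.mem_reverse]
      have := hpmax _ _ _ hqpath
      rw [SimpleGraph.Walk.length_cons, SimpleGraph.Walk.length_reverse] at this
      omega
    -- x must be u
    have hxu : x = u := by
      by_contra hxu
      have hxw : x ≠ w := hwx.symm
      obtain ⟨e₁, he₁p, e₂, he₂p, hne12, hxe₁, hxe₂⟩ :=
        internal_two_edges p hp hxsupp hxu hxw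
      have he₁F : e₁ ∈ F := hedge_mem (p.edges_subset_edgeSet he₁p)
      have he₂F : e₂ ∈ F := hedge_mem (p.edges_subset_edgeSet he₂p)
      have hxvert : x ∈ vertSet F := mem_vertSet.2 ⟨e₁, he₁F, hxe₁⟩
      have hdegx := hdeg x hxvert
      have hsub3 : ({e₁, e₂, s(w,x)} : Finset (Sym2 V)) ⊆ F.filter (fun e => x ∈ e) := by
        intro e he
        simp only [Finset.mem_insert, Finset.mem_singleton] at he
        rcases he with rfl | rfl | rfl <;> rw [Finset.mem_filter]
        · exact ⟨he₁F, hxe₁⟩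
        · exact ⟨he₂F, hxe₂⟩
        · exact ⟨he'F, by simp⟩
      have hne1' : e₁ ≠ s(w,x) := by rintro rfl; exact he'notp he₁p
      have hne2' : e₂ ≠ s(w,x) := by rintro rfl; exact he'notp he₂p
      have hcard3 : ({e₁, e₂, s(w,x)} : Finset (Sym2 V)).card = 3 := by
        rw [Finset.card_insert_of_notMem (by simp [hne12, hne1']),
          Finset.card_insert_of_notMem (by simp [hne2']), Finset.card_singleton]
      have := Finset.card_le_card hsub3
      rw [hcard3] at this
      rw [show (F.filter (fun e => x ∈ e)).card = edgeDeg F x from rfl] at this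
      omega
    -- build the cycle
    have hadjwu : H.Adj w u := by
      have h0 := hHadj he'F hwx
      rwa [hxu] at h0
    have he'notp' : s(w, u) ∉ p.edges := by
      have h0 := he'notp
      rwa [hxu] at h0
    set c : H.Walk w w := SimpleGraph.Walk.cons hadjwu p with hc_def
    have hc : c.IsCycle := by
      rw [hc_def, SimpleGraph.Walk.cons_isCycle_iff]
      exact ⟨hp, he'notp'⟩
    set A := c.edges.toFinset with hA
    have hAsubF : A ⊆ F := by
      intro e he
      exact hedge_mem (c.edges_subset_edgeSet (List.mem_toFinset.1 he))
    have hAne : A.Nonempty := ⟨s(w,u), by rw [hA, hc_def]; simp⟩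
    obtain ⟨hAcard, hAvcard, hAdeg⟩ := cycle_struct c hc
    -- every F-edge at a vertex of A is in A
    have hin : ∀ v ∈ vertSet A, ∀ e ∈ F, v ∈ e → e ∈ A := by
      intro v hv e heF hve
      have hsubfil : A.filter (fun e => v ∈ e) ⊆ F.filter (fun e => v ∈ e) :=
        Finset.filter_subset_filter _ hAsubF
      have hvF : v ∈ vertSet F := vertSet_mono hAsubF hv
      have hcards : (F.filter (fun e => v ∈ e)).card ≤ (A.filter (fun e => v ∈ e)).card := by
        rw [show (F.filter (fun e => v ∈ e)).card = edgeDeg F v from rfl,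
          show (A.filter (fun e => v ∈ e)).card = edgeDeg A v from rfl,
          hdeg v hvF, hAdeg v hv]
      have heq := Finset.eq_of_subset_of_card_le hsubfil hcards
      have : e ∈ F.filter (fun e => v ∈ e) := Finset.mem_filter.2 ⟨heF, hve⟩
      rw [← heq] at this
      exact (Finset.mem_filter.1 this).1
    set F' := F \ A with hF'
    have hvdisjA : ∀ v ∈ vertSet A, v ∉ vertSet F' := by
      intro v hv hv'
      rcases mem_vertSet.1 hv' with ⟨e, he, hve⟩
      rw [hF', Finset.mem_sdiff] at he
      exact he.2 (hin v hv e he.1 hve)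
    have hF'card : F'.card ≤ n := by
      have h1 : F'.card < F.card := by
        apply Finset.card_lt_card
        rw [hF']
        constructor
        · exact Finset.sdiff_subset
        · intro hsub
          obtain ⟨e, he⟩ := hAne
          have := hsub (hAsubF he)
          rw [Finset.mem_sdiff] at this
          exact this.2 he
      omega
    have hdiag' : ∀ e ∈ F', ¬ e.IsDiag := fun e he => hdiag e (Finset.sdiff_subset he)
    have hdeg' : ∀ v ∈ vertSet F', edgeDeg F' v = 2 := by
      intro v hv
      have hvA : v ∉ vertSet A := fun hvA => hvdisjA v hvA hv
      have hfil : F'.filter (fun e => v ∈ e) = F.filter (fun e => v ∈ e) := by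
        apply Finset.Subset.antisymm
        · exact Finset.filter_subset_filter _ Finset.sdiff_subset
        · intro e he
          rw [Finset.mem_filter] at he
          rw [Finset.mem_filter, hF', Finset.mem_sdiff]
          refine ⟨⟨he.1, fun heA => hvA (mem_vertSet.2 ⟨e, heA, he.2⟩)⟩, he.2⟩
      have hvF : v ∈ vertSet F := vertSet_mono Finset.sdiff_subset hv
      rw [show edgeDeg F' v = (F'.filter (fun e => v ∈ e)).card from rfl, hfil]
      exact hdeg v hvF
    obtain ⟨Q', hQ'mem, hQ'disj, hQ'union⟩ := ih F' hF'card hdiag' hdeg'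
    refine ⟨insert A Q', ?_, ?_, ?_⟩
    · intro B hB
      rcases Finset.mem_insert.1 hB with rfl | hB
      · refine ⟨hAne, hAsubF, ?_⟩
        have hq : ∀ e ∈ c.edges, e ∈ (SimpleGraph.fromEdgeSet (↑A : Set (Sym2 V))).edgeSet := by
          intro e he
          rw [SimpleGraph.edgeSet_fromEdgeSet]
          refine ⟨Finset.mem_coe.mpr (List.mem_toFinset.2 he), ?_⟩
          simpa using hdiag e (hAsubF (List.mem_toFinset.2 he))
        refine ⟨w, c.transfer _ hq, hc.transfer hq, ?_⟩
        rw [SimpleGraph.Walk.edges_transfer]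
      · obtain ⟨h1, h2, h3⟩ := hQ'mem B hB
        exact ⟨h1, h2.trans Finset.sdiff_subset, h3⟩
    · intro B₁ hB₁ B₂ hB₂ hne
      rcases Finset.mem_insert.1 hB₁ with rfl | hB₁ <;>
        rcases Finset.mem_insert.1 hB₂ with rfl | hB₂
      · exact absurd rfl hne
      · intro v hv1 hv2
        rcases hv1 with ⟨e, he, hve⟩
        rcases hv2 with ⟨e2, he2, hve2⟩
        have hvA : v ∈ vertSet A := mem_vertSet.2 ⟨e, he, hve⟩
        have hvF' : v ∈ vertSet F' :=
          mem_vertSet.2 ⟨e2, (hQ'mem B₂ hB₂).2.1 he2, hve2⟩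
        exact hvdisjA v hvA hvF'
      · intro v hv1 hv2
        rcases hv1 with ⟨e, he, hve⟩
        rcases hv2 with ⟨e2, he2, hve2⟩
        have hvA : v ∈ vertSet A := mem_vertSet.2 ⟨e2, he2, hve2⟩
        have hvF' : v ∈ vertSet F' :=
          mem_vertSet.2 ⟨e, (hQ'mem B₁ hB₁).2.1 he, hve⟩
        exact hvdisjA v hvA hvF'
      · exact hQ'disj B₁ hB₁ B₂ hB₂ hne
    · rw [Finset.biUnion_insert, hQ'union]
      simp only [id]
      rw [hF', Finset.union_sdiff_of_subset hAsubF]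

end CycleDecomp

section MainLemma

lemma main_struct : ∀ (n : ℕ) (F : Finset (Sym2 V)) (f : Sym2 V → ℝ), F.card ≤ n →
    (∀ e ∈ F, 0 < f e) → (∀ e ∉ F, f e = 0) → (∀ e ∈ F, ¬ e.IsDiag) →
    (∀ v ∈ vertSet F, fracDeg f v = 1) →
    ∃ F', F' ⊆ F ∧ vertSet F' = vertSet F ∧ EdgesAndOddCycles F' := by
  intro n
  induction n with
  | zero =>
    intro F f hcard _ _ _ _
    have : F = ∅ := Finset.card_eq_zero.1 (Nat.le_zero.1 hcard)
    subst this
    exact ⟨∅, Finset.Subset.refl _, rfl, ⟨∅, by simp, by simp, by simp⟩⟩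
  | succ n ih =>
    intro F f hcard hpos hsupp hdiag hdeg
    have hfilter_eq : ∀ v : V, fracDeg f v = ∑ e ∈ F.filter (fun e => v ∈ e), f e := by
      intro v
      rw [fracDeg]
      apply (Finset.sum_subset (Finset.filter_subset_filter _ (Finset.subset_univ F)) _).symm
      intro e he hne
      rcases Finset.mem_filter.1 he with ⟨-, hv⟩
      by_cases heF : e ∈ F
      · exact absurd (Finset.mem_filter.2 ⟨heF, hv⟩) hne
      · exact hsupp e heF
    have hstep2 : ∀ v ∈ vertSet F, ∀ e ∈ F, v ∈ e → edgeDeg F v = 1 → f e = 1 := by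
      intro v hv e heF hve hdeg1
      have hcard1 : (F.filter (fun e => v ∈ e)).card = 1 := hdeg1
      have hsingle : F.filter (fun e => v ∈ e) = {e} := by
        apply Finset.eq_singleton_iff_unique_mem.2
        refine ⟨Finset.mem_filter.2 ⟨heF, hve⟩, ?_⟩
        intro e' he'
        exact Finset.card_le_one.1 (le_of_eq hcard1) e' he' e (Finset.mem_filter.2 ⟨heF, hve⟩)
      have := hdeg v hv
      rw [hfilter_eq v, hsingle, Finset.sum_singleton] at this
      exact this
    have hstep3 : ∀ e ∈ F, f e = 1 → ∀ v ∈ e, edgeDeg F v = 1 := by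
      intro e heF hfe v hve
      have hv : v ∈ vertSet F := mem_vertSet.2 ⟨e, heF, hve⟩
      have h1 := hdeg v hv
      rw [hfilter_eq v] at h1
      by_contra hne1
      have hcardne : (F.filter (fun e => v ∈ e)).card ≠ 1 := hne1
      have hememb : e ∈ F.filter (fun e => v ∈ e) := Finset.mem_filter.2 ⟨heF, hve⟩
      have h0 : 1 ≤ (F.filter (fun e => v ∈ e)).card := Finset.card_pos.2 ⟨e, hememb⟩
      have h2 : 1 < (F.filter (fun e => v ∈ e)).card := by omega
      obtain ⟨e', he'mem, he'ne⟩ := Finset.exists_mem_ne h2 e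
      have hsplit : ∑ e'' ∈ F.filter (fun e => v ∈ e), f e''
          = f e + ∑ e'' ∈ (F.filter (fun e => v ∈ e)).erase e, f e'' := by
        rw [Finset.add_sum_erase _ _ hememb]
      have hpos' : 0 < ∑ e'' ∈ (F.filter (fun e => v ∈ e)).erase e, f e'' := by
        apply Finset.sum_pos
        · intro e'' he''
          exact hpos e'' (Finset.mem_filter.1 (Finset.mem_of_mem_erase he'')).1
        · exact ⟨e', Finset.mem_erase.2 ⟨he'ne, he'mem⟩⟩
      rw [hsplit, hfe] at h1
      linarith
    have hiso : ∀ e ∈ F, ∀ v ∈ e, edgeDeg F v = 1 → (∀ u ∈ e, edgeDeg F u = 1) := by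
      intro e heF v hve hdeg1 u hue
      have hv : v ∈ vertSet F := mem_vertSet.2 ⟨e, heF, hve⟩
      exact hstep3 e heF (hstep2 v hv e heF hve hdeg1) u hue
    by_cases hind : LinearIndependent ℝ (fun e : {x // x ∈ F} => incVec (e : Sym2 V))
    · -- Case B : independent, read off the structure
      set F₁ := F.filter (fun e => ∀ v ∈ e, edgeDeg F v = 1) with hF₁
      set F₂ := F \ F₁ with hF₂def
      have hF₂sub : F₂ ⊆ F := Finset.sdiff_subset
      -- no vertex of F₂ has degree 1, and F-edges at F₂-vertices are F₂-edges
      have hdegF₂ : ∀ v ∈ vertSet F₂, 2 ≤ edgeDeg F v ∧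
          F₂.filter (fun e => v ∈ e) = F.filter (fun e => v ∈ e) := by
        intro v hv
        rcases mem_vertSet.1 hv with ⟨e, heF₂, hve⟩
        have heF : e ∈ F := hF₂sub heF₂
        have hnotiso : e ∉ F₁ := (Finset.mem_sdiff.1 heF₂).2
        have hvF : v ∈ vertSet F := mem_vertSet.2 ⟨e, heF, hve⟩
        have hne1 : edgeDeg F v ≠ 1 := by
          intro h1
          exact hnotiso (Finset.mem_filter.2 ⟨heF, hiso e heF v hve h1⟩)
        have h0 : 1 ≤ edgeDeg F v := Finset.card_pos.2 ⟨e, Finset.mem_filter.2 ⟨heF, hve⟩⟩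
        have hnoF₁ : ∀ e' ∈ F₁, v ∉ e' := by
          intro e' he' hve'
          rcases Finset.mem_filter.1 he' with ⟨he'F, hall⟩
          exact hne1 (hall v hve')
        refine ⟨by omega, ?_⟩
        apply Finset.Subset.antisymm (Finset.filter_subset_filter _ hF₂sub)
        intro e' he'
        rcases Finset.mem_filter.1 he' with ⟨he'F, hve'⟩
        refine Finset.mem_filter.2 ⟨Finset.mem_sdiff.2 ⟨he'F, ?_⟩, hve'⟩
        intro he'F₁
        exact hnoF₁ e' he'F₁ hve'
      have hdiag₂ : ∀ e ∈ F₂, ¬ e.IsDiag := fun e he => hdiag e (hF₂sub he)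
      have hcount : F₂.card ≤ (vertSet F₂).card :=
        card_le_vertSet_of_linearIndependent hF₂sub hind
      have hhs₂ : ∑ v ∈ vertSet F₂, edgeDeg F₂ v = 2 * F₂.card := handshake_nat hdiag₂
      have hdeg₂ge : ∀ v ∈ vertSet F₂, 2 ≤ edgeDeg F₂ v := by
        intro v hv
        obtain ⟨h2, hfil⟩ := hdegF₂ v hv
        show 2 ≤ (F₂.filter (fun e => v ∈ e)).card
        rw [hfil]
        exact h2
      have hdeg₂ : ∀ v ∈ vertSet F₂, edgeDeg F₂ v = 2 := by
        by_contra hcon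
        push_neg at hcon
        obtain ⟨v₀, hv₀, hne₀⟩ := hcon
        have hgt : 2 < edgeDeg F₂ v₀ := lt_of_le_of_ne (hdeg₂ge v₀ hv₀) (Ne.symm hne₀)
        have hlt : 2 * (vertSet F₂).card < ∑ v ∈ vertSet F₂, edgeDeg F₂ v := by
          calc 2 * (vertSet F₂).card = ∑ _v ∈ vertSet F₂, 2 := by
                rw [Finset.sum_const, smul_eq_mul, mul_comm]
            _ < ∑ v ∈ vertSet F₂, edgeDeg F₂ v :=
                Finset.sum_lt_sum hdeg₂ge ⟨v₀, hv₀, hgt⟩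
        rw [hhs₂] at hlt
        omega
      obtain ⟨Q, hQmem, hQdisj, hQunion⟩ :=
        cycleDecomp F₂.card F₂ le_rfl hdiag₂ hdeg₂
      -- each piece of Q is an odd cycle set
      have hQodd : ∀ A ∈ Q, IsOddCycleSet A := by
        intro A hA
        obtain ⟨hAne, hAsub, v, c, hc, hce⟩ := hQmem A hA
        refine ⟨v, c, hc, ?_, hce⟩
        apply cycle_odd_of_linearIndependent hind c hc
        rw [hce]
        exact hAsub.trans hF₂sub
      -- assemble the partition
      set P := Q ∪ F₁.image (fun e => ({e} : Finset (Sym2 V))) with hP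
      have hvertF₁ : ∀ e ∈ F₁, ∀ v ∈ e, edgeDeg F v = 1 := by
        intro e he
        exact (Finset.mem_filter.1 he).2
      refine ⟨F, Finset.Subset.refl _, rfl, P, ?_, ?_, ?_⟩
      · intro A hA
        rcases Finset.mem_union.1 hA with hA | hA
        · exact Or.inr (hQodd A hA)
        · obtain ⟨e, _, rfl⟩ := Finset.mem_image.1 hA
          exact Or.inl ⟨e, rfl⟩
      · intro A hA B hB hne v hv1 hv2
        rcases hv1 with ⟨e1, he1, hve1⟩
        rcases hv2 with ⟨e2, he2, hve2⟩
        rcases Finset.mem_union.1 hA with hA' | hA' <;>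
          rcases Finset.mem_union.1 hB with hB' | hB'
        · exact hQdisj A hA' B hB' hne v ⟨e1, he1, hve1⟩ ⟨e2, he2, hve2⟩
        · -- A cycle piece, B singleton
          obtain ⟨e, heF₁, rfl⟩ := Finset.mem_image.1 hB'
          rw [Finset.mem_singleton] at he2
          subst he2
          have h1 : edgeDeg F v = 1 := hvertF₁ e2 heF₁ v hve2
          have hv₂ : v ∈ vertSet F₂ := mem_vertSet.2 ⟨e1, (hQmem A hA').2.1 he1, hve1⟩
          obtain ⟨h2, -⟩ := hdegF₂ v hv₂
          omega
        · obtain ⟨e, heF₁, rfl⟩ := Finset.mem_image.1 hA'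
          rw [Finset.mem_singleton] at he1
          subst he1
          have h1 : edgeDeg F v = 1 := hvertF₁ e1 heF₁ v hve1
          have hv₂ : v ∈ vertSet F₂ := mem_vertSet.2 ⟨e2, (hQmem B hB').2.1 he2, hve2⟩
          obtain ⟨h2, -⟩ := hdegF₂ v hv₂
          omega
        · -- both singletons
          obtain ⟨e, heF₁, rfl⟩ := Finset.mem_image.1 hA'
          obtain ⟨e', he'F₁, rfl⟩ := Finset.mem_image.1 hB'
          rw [Finset.mem_singleton] at he1 he2
          subst he1; subst he2
          have hne' : e1 ≠ e2 := by
            intro h; subst h; exact hne rfl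
          have h1 : edgeDeg F v = 1 := hvertF₁ e1 heF₁ v hve1
          have h2 : 1 < (F.filter (fun e => v ∈ e)).card := by
            apply Finset.one_lt_card.2
            exact ⟨e1, Finset.mem_filter.2 ⟨(Finset.mem_filter.1 heF₁).1, hve1⟩,
              e2, Finset.mem_filter.2 ⟨(Finset.mem_filter.1 he'F₁).1, hve2⟩, hne'⟩
          have : (F.filter (fun e => v ∈ e)).card = 1 := h1
          omega
      · have hbu : (Q ∪ F₁.image (fun e => ({e} : Finset (Sym2 V)))).biUnion id
            = Q.biUnion id ∪ (F₁.image (fun e => ({e} : Finset (Sym2 V)))).biUnion id := by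
          ext e
          simp only [Finset.mem_biUnion, Finset.mem_union, id]
          constructor
          · rintro ⟨A, hA | hA, he⟩
            exacts [Or.inl ⟨A, hA, he⟩, Or.inr ⟨A, hA, he⟩]
          · rintro (⟨A, hA, he⟩ | ⟨A, hA, he⟩)
            exacts [⟨A, Or.inl hA, he⟩, ⟨A, Or.inr hA, he⟩]
        show (Q ∪ F₁.image (fun e => ({e} : Finset (Sym2 V)))).biUnion id = F
        rw [hbu, hQunion]
        have himg : (F₁.image (fun e => ({e} : Finset (Sym2 V)))).biUnion id = F₁ := by
          ext e
          simp [Finset.mem_biUnion]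
        rw [himg, hF₂def, Finset.sdiff_union_self_eq_union, Finset.union_eq_left]
        exact Finset.filter_subset _ _
    · -- Case A : dependent, reduce the support
      obtain ⟨g, hgsum, i₀, hgne⟩ := Fintype.not_linearIndependent_iff.1 hind
      set z : Sym2 V → ℝ := fun e => if h : e ∈ F then g ⟨e, h⟩ else 0 with hz
      have hzF : ∀ e ∉ F, z e = 0 := by
        intro e he
        simp only [hz]
        exact dif_neg he
      have hzdeg : ∀ v, fracDeg z v = 0 := by
        intro v
        rw [fracDeg_eq_sum_incVec]
        have h1 : ∑ e : Sym2 V, z e * incVec e v = ∑ e ∈ F, z e * incVec e v := by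
          apply (Finset.sum_subset (Finset.subset_univ F) _).symm
          intro e _ he
          rw [hzF e he, zero_mul]
        have h2 : ∑ e ∈ F, z e * incVec e v
            = ∑ i : {x // x ∈ F}, g i * incVec (i : Sym2 V) v := by
          rw [← Finset.sum_coe_sort F (fun e => z e * incVec e v)]
          refine Finset.sum_congr rfl fun i _ => ?_
          simp only [hz]
          rw [dif_pos i.2]
        have h3 := congrFun hgsum v
        rw [Finset.sum_apply, Pi.zero_apply] at h3
        rw [h1, h2, ← h3]
        rfl
      have hzsum : ∑ e : Sym2 V, z e = 0 := by
        have h := handshake_real (S := Finset.univ) (f := z) ?_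
        · have h0 : ∑ v ∈ Finset.univ, fracDeg z v = 0 :=
            Finset.sum_eq_zero fun v _ => hzdeg v
          rw [h0] at h
          linarith
        · intro e hze
          have heF : e ∈ F := by
            by_contra heF
            exact hze (hzF e heF)
          exact ⟨hdiag e heF, fun v _ => Finset.mem_univ v⟩
      have hzi₀ : z (i₀ : Sym2 V) ≠ 0 := by
        simp only [hz]
        rw [dif_pos i₀.2]
        simpa using hgne
      have hneg : ∃ e ∈ F, z e < 0 := by
        by_contra hcon
        push_neg at hcon
        have hnn : ∀ e : Sym2 V, 0 ≤ z e := by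
          intro e
          by_cases he : e ∈ F
          · exact hcon e he
          · rw [hzF e he]
        have hpos₀ : 0 < z (i₀ : Sym2 V) := lt_of_le_of_ne (hnn _) (Ne.symm hzi₀)
        have hgt : 0 < ∑ e : Sym2 V, z e :=
          lt_of_lt_of_le hpos₀ (Finset.single_le_sum (fun e _ => hnn e) (Finset.mem_univ _))
        linarith
      set T := F.filter (fun e => z e < 0) with hT
      have hTne : T.Nonempty := by
        obtain ⟨e, heF, hez⟩ := hneg
        exact ⟨e, Finset.mem_filter.2 ⟨heF, hez⟩⟩
      obtain ⟨e₀, he₀T, he₀min⟩ := T.exists_min_image (fun e => f e / (-z e)) hTne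
      rcases Finset.mem_filter.1 he₀T with ⟨he₀F, he₀z⟩
      have hz0 : z e₀ ≠ 0 := ne_of_lt he₀z
      set t := f e₀ / (-z e₀) with ht
      have htpos : 0 < t := div_pos (hpos e₀ he₀F) (by linarith)
      set f' := fun e => f e + t * z e with hf'
      have hf'nonneg : ∀ e, 0 ≤ f' e := by
        intro e
        show 0 ≤ f e + t * z e
        by_cases heF : e ∈ F
        · by_cases hze : z e < 0
          · have heT : e ∈ T := Finset.mem_filter.2 ⟨heF, hze⟩
            have hmin : t ≤ f e / (-z e) := he₀min e heT
            have hzpos : (0:ℝ) < -z e := by linarith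
            have hle : t * (-z e) ≤ f e := (le_div_iff₀ hzpos).1 hmin
            nlinarith
          · push_neg at hze
            have h1 := hpos e heF
            nlinarith
        · rw [hsupp e heF, hzF e heF]
          simp
      have hf'e₀ : f' e₀ = 0 := by
        show f e₀ + t * z e₀ = 0
        rw [ht]
        field_simp
        ring
      have hdegeq : ∀ v, fracDeg f' v = fracDeg f v := by
        intro v
        show fracDeg (fun e => f e + t * z e) v = fracDeg f v
        unfold fracDeg
        rw [Finset.sum_add_distrib]
        have h1 : ∑ e ∈ Finset.univ.filter (fun e : Sym2 V => v ∈ e), t * z e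
            = t * fracDeg z v := by
          rw [fracDeg, Finset.mul_sum]
        rw [h1, hzdeg v, mul_zero, add_zero]
      set F'' := F.filter (fun e => 0 < f' e) with hF''
      have hsub'' : F'' ⊆ F := Finset.filter_subset _ _
      have hcard'' : F''.card ≤ n := by
        have he₀notin : e₀ ∉ F'' := by
          intro hmem
          rcases Finset.mem_filter.1 hmem with ⟨-, hgt⟩
          rw [hf'e₀] at hgt
          exact lt_irrefl 0 hgt
        have hss : F'' ⊆ F.erase e₀ := by
          intro e he
          exact Finset.mem_erase.2 ⟨fun h => he₀notin (h ▸ he), hsub'' he⟩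
        have h1 := Finset.card_le_card hss
        have h2 := Finset.card_erase_of_mem he₀F
        omega
      have hpos'' : ∀ e ∈ F'', 0 < f' e := fun e he => (Finset.mem_filter.1 he).2
      have hsupp'' : ∀ e ∉ F'', f' e = 0 := by
        intro e he
        by_cases heF : e ∈ F
        · have h1 : ¬ 0 < f' e := fun h => he (Finset.mem_filter.2 ⟨heF, h⟩)
          have h2 := hf'nonneg e
          linarith
        · show f e + t * z e = 0
          rw [hsupp e heF, hzF e heF]
          ring
      have hdiag'' : ∀ e ∈ F'', ¬ e.IsDiag := fun e he => hdiag e (hsub'' he)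
      have hvert'' : vertSet F'' = vertSet F := by
        apply Finset.Subset.antisymm (vertSet_mono hsub'')
        intro v hv
        by_contra hcon
        have h1 : fracDeg f' v = 0 := by
          unfold fracDeg
          apply Finset.sum_eq_zero
          intro e he
          apply hsupp''
          intro hmem
          exact hcon (mem_vertSet.2 ⟨e, hmem, (Finset.mem_filter.1 he).2⟩)
        rw [hdegeq v, hdeg v hv] at h1
        linarith
      have hdeg'' : ∀ v ∈ vertSet F'', fracDeg f' v = 1 := by
        intro v hv
        rw [hdegeq v]
        exact hdeg v (by rw [← hvert'']; exact hv)
      obtain ⟨F', h1, h2, h3⟩ := ih F'' f' hcard'' hpos'' hsupp'' hdiag'' hdeg''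
      exact ⟨F', h1.trans hsub'', by rw [h2, hvert''], h3⟩

end MainLemma

lemma oddCycleSet_props {A : Finset (Sym2 V)} (h : IsOddCycleSet A) :
    3 ≤ A.card ∧ (vertSet A).card = A.card ∧ ∀ v ∈ vertSet A, edgeDeg A v = 2 := by
  obtain ⟨v, c, hc, hodd, hce⟩ := h
  obtain ⟨h1, h2, h3⟩ := cycle_struct c hc
  rw [hce] at h1 h2 h3
  refine ⟨?_, by omega, h3⟩
  have := hc.three_le_length
  omega

/-- `G` has a `δ`-Partitionable fractional perfect matching iff `E` contains
`δ` nonempty pairwise vertex-disjoint edge sets whose union is an edge cover, each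
consisting of single edges and odd cycles and covering exactly `|V|/δ` vertices. -/
theorem delta_partitionable_characterization (G : SimpleGraph V)
    (hG : ∀ v : V, ∃ u, G.Adj u v) (δ : ℕ) (hδ : 1 ≤ δ) :
    (∃ f : Sym2 V → ℝ, IsFPM G f ∧ IsDeltaPartitionable f δ) ↔
    ∃ E' : Fin δ → Finset (Sym2 V),
      (∀ j, (E' j).Nonempty) ∧
      (∀ j, ↑(E' j) ⊆ G.edgeSet) ∧
      (∀ j k, j ≠ k → VDisj (E' j) (E' k)) ∧
      (∀ v : V, ∃ j, ∃ e ∈ E' j, v ∈ e) ∧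
      (∀ j, EdgesAndOddCycles (E' j)) ∧
      (∀ j, ((vertSet (E' j)).card : ℝ) = (Fintype.card V : ℝ) / δ) := by
  have hδ0 : (δ : ℝ) ≠ 0 := Nat.cast_ne_zero.2 (by omega)
  constructor
  · rintro ⟨f, ⟨hf01, hfedge, hfdeg⟩, P, hPne, hPdisj, hPsub, hPcover, hPsum⟩
    have hsuppedge : ∀ e ∈ fSupp f, e ∈ G.edgeSet := by
      intro e he
      by_contra hco
      have h0 := hfedge e hco
      rw [fSupp, Finset.mem_filter] at he
      linarith [he.2]
    have hsuppdiag : ∀ e ∈ fSupp f, ¬ e.IsDiag :=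
      fun e he => SimpleGraph.not_isDiag_of_mem_edgeSet G (hsuppedge e he)
    have key : ∀ j : Fin δ, ∃ F', F' ⊆ P j ∧ vertSet F' = vertSet (P j) ∧
        EdgesAndOddCycles F' ∧ ((vertSet (P j)).card : ℝ) = 2 * ∑ e ∈ P j, f e := by
      intro j
      set fj : Sym2 V → ℝ := fun e => if e ∈ P j then f e else 0 with hfj
      have hfjpos : ∀ e ∈ P j, 0 < fj e := by
        intro e he
        simp only [hfj]
        rw [if_pos he]
        have h0 := hPsub j he
        rw [fSupp, Finset.mem_filter] at h0
        exact h0.2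
      have hfjsupp : ∀ e ∉ P j, fj e = 0 := by
        intro e he
        simp only [hfj]
        rw [if_neg he]
      have hfjdiag : ∀ e ∈ P j, ¬ e.IsDiag := fun e he => hsuppdiag e (hPsub j he)
      have hfjdeg : ∀ v ∈ vertSet (P j), fracDeg fj v = fracDeg f v := by
        intro v hv
        rcases mem_vertSet.1 hv with ⟨eb, hebP, hveb⟩
        unfold fracDeg
        apply Finset.sum_congr rfl
        intro e he
        rcases Finset.mem_filter.1 he with ⟨-, hve⟩
        by_cases heP : e ∈ P j
        · simp only [hfj]; rw [if_pos heP]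
        · simp only [hfj]; rw [if_neg heP]
          by_contra hne
          have hne' : f e ≠ 0 := fun h => hne h.symm
          have hfpos : 0 < f e := lt_of_le_of_ne (hf01 e).1 (Ne.symm hne')
          have heSupp : e ∈ fSupp f := Finset.mem_filter.2 ⟨Finset.mem_univ _, hfpos⟩
          obtain ⟨k, hk⟩ := hPcover e heSupp
          have hkj : k ≠ j := fun h => heP (h ▸ hk)
          exact hPdisj j k (Ne.symm hkj) v ⟨eb, hebP, hveb⟩ ⟨e, hk, hve⟩
      have hfjdeg1 : ∀ v ∈ vertSet (P j), fracDeg fj v = 1 := by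
        intro v hv
        rw [hfjdeg v hv]
        exact hfdeg v
      obtain ⟨F', h1, h2, h3⟩ :=
        main_struct (P j).card (P j) fj le_rfl hfjpos hfjsupp hfjdiag hfjdeg1
      refine ⟨F', h1, h2, h3, ?_⟩
      have hcond : ∀ e : Sym2 V, fj e ≠ 0 → ¬ e.IsDiag ∧ ∀ v ∈ e, v ∈ vertSet (P j) := by
        intro e hne0
        have heP : e ∈ P j := by
          by_contra h
          exact hne0 (hfjsupp e h)
        exact ⟨hfjdiag e heP, fun v hv => mem_vertSet.2 ⟨e, heP, hv⟩⟩
      have hhs := handshake_real hcond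
      have hL : ∑ v ∈ vertSet (P j), fracDeg fj v = ((vertSet (P j)).card : ℝ) := by
        rw [Finset.sum_congr rfl hfjdeg1, Finset.sum_const, nsmul_eq_mul, mul_one]
      have hR : ∑ e : Sym2 V, fj e = ∑ e ∈ P j, f e := by
        rw [← Finset.sum_subset (Finset.subset_univ (P j))
          (fun e _ he => hfjsupp e he)]
        refine Finset.sum_congr rfl fun e he => ?_
        simp only [hfj]; rw [if_pos he]
      rw [hL, hR] at hhs
      exact hhs
    choose E' hEsub hEvert hEstruct hEcard using key
    refine ⟨E', ?_, ?_, ?_, ?_, hEstruct, ?_⟩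
    · intro j
      rcases hPne j with ⟨e, he⟩
      have hv : e.out.1 ∈ vertSet (P j) := mem_vertSet.2 ⟨e, he, Sym2.out_fst_mem e⟩
      rw [← hEvert j] at hv
      rcases mem_vertSet.1 hv with ⟨e', he', -⟩
      exact ⟨e', he'⟩
    · intro j e he
      exact hsuppedge e (hPsub j (hEsub j he))
    · intro j k hjk v hv1 hv2
      rcases hv1 with ⟨e1, he1, hv1⟩
      rcases hv2 with ⟨e2, he2, hv2⟩
      exact hPdisj j k hjk v ⟨e1, hEsub j he1, hv1⟩ ⟨e2, hEsub k he2, hv2⟩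
    · intro v
      have h1 : fracDeg f v = 1 := hfdeg v
      have hex : ∃ e, v ∈ e ∧ f e ≠ 0 := by
        by_contra hcon
        push_neg at hcon
        have h0 : fracDeg f v = 0 := Finset.sum_eq_zero fun e he =>
          hcon e (Finset.mem_filter.1 he).2
        rw [h1] at h0
        norm_num at h0
      obtain ⟨e, hve, hfe⟩ := hex
      have hfpos : 0 < f e := lt_of_le_of_ne (hf01 e).1 (Ne.symm hfe)
      obtain ⟨j, hj⟩ := hPcover e (Finset.mem_filter.2 ⟨Finset.mem_univ _, hfpos⟩)
      have hvE : v ∈ vertSet (E' j) := by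
        rw [hEvert j]; exact mem_vertSet.2 ⟨e, hj, hve⟩
      rcases mem_vertSet.1 hvE with ⟨e', he', hv'⟩
      exact ⟨j, e', he', hv'⟩
    · intro j
      rw [hEvert j, hEcard j, hPsum j]
      field_simp
  · rintro ⟨E', hne, hsubE, hdisjE, hcover, hstruct, hcardE⟩
    choose P hPpieces hPdisj hPunion using hstruct
    have hdiagE : ∀ j, ∀ e ∈ E' j, ¬ e.IsDiag :=
      fun j e he => SimpleGraph.not_isDiag_of_mem_edgeSet G (hsubE j he)
    have hAmem : ∀ (j : Fin δ) (e : Sym2 V), e ∈ E' j ↔ ∃ A ∈ P j, e ∈ A := by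
      intro j e
      rw [← hPunion j, Finset.mem_biUnion]
      simp only [id]
    set f : Sym2 V → ℝ := fun e =>
      if ∃ j, ∃ A ∈ P j, e ∈ A ∧ IsSingleEdge A then 1
      else if ∃ j, ∃ A ∈ P j, e ∈ A then 1/2 else 0 with hfdef
    have hnotboth : ∀ A : Finset (Sym2 V), IsOddCycleSet A → ¬ IsSingleEdge A := by
      intro A hodd hsing
      obtain ⟨h3, -, -⟩ := oddCycleSet_props hodd
      obtain ⟨e, rfl⟩ := hsing
      simp at h3
    have huniq : ∀ (j j' : Fin δ) (A A' : Finset (Sym2 V)) (e : Sym2 V),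
        A ∈ P j → A' ∈ P j' → e ∈ A → e ∈ A' → j = j' ∧ A = A' := by
      intro j j' A A' e hA hA' he he'
      have hv := Sym2.out_fst_mem e
      have hj : j = j' := by
        by_contra hjj
        exact hdisjE j j' hjj e.out.1 ⟨e, (hAmem j e).2 ⟨A, hA, he⟩, hv⟩
          ⟨e, (hAmem j' e).2 ⟨A', hA', he'⟩, hv⟩
      subst hj
      refine ⟨rfl, ?_⟩
      by_contra hAA
      exact hPdisj j A hA A' hA' hAA e.out.1 ⟨e, he, hv⟩ ⟨e, he', hv⟩
    have hval1 : ∀ (j : Fin δ) A e, A ∈ P j → e ∈ A → IsSingleEdge A → f e = 1 := by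
      intro j A e hA he hs
      simp only [hfdef]
      rw [if_pos ⟨j, A, hA, he, hs⟩]
    have hval2 : ∀ (j : Fin δ) A e, A ∈ P j → e ∈ A → IsOddCycleSet A → f e = 1/2 := by
      intro j A e hA he hodd
      simp only [hfdef]
      rw [if_neg, if_pos ⟨j, A, hA, he⟩]
      rintro ⟨j', A', hA', he', hs'⟩
      obtain ⟨-, rfl⟩ := huniq j' j A' A e hA' hA he' he
      exact hnotboth A' hodd hs'
    have hfpos : ∀ (j : Fin δ) A e, A ∈ P j → e ∈ A → 0 < f e := by
      intro j A e hA he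
      rcases hPpieces j A hA with hs | ho
      · rw [hval1 j A e hA he hs]; norm_num
      · rw [hval2 j A e hA he ho]; norm_num
    have hf0 : ∀ e, f e ≠ 0 → ∃ j, ∃ A ∈ P j, e ∈ A := by
      intro e hne
      simp only [hfdef] at hne
      by_cases h1 : ∃ j, ∃ A ∈ P j, e ∈ A ∧ IsSingleEdge A
      · obtain ⟨j, A, hA, he, -⟩ := h1
        exact ⟨j, A, hA, he⟩
      · rw [if_neg h1] at hne
        by_cases h2 : ∃ j, ∃ A ∈ P j, e ∈ A
        · exact h2
        · rw [if_neg h2] at hne; exact absurd rfl hne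
    have hf01 : ∀ e, 0 ≤ f e ∧ f e ≤ 1 := by
      intro e
      simp only [hfdef]
      split
      · norm_num
      · split <;> norm_num
    have honly : ∀ (j : Fin δ) A, A ∈ P j → ∀ v, (∃ eb ∈ A, v ∈ eb) →
        ∀ e', v ∈ e' → f e' ≠ 0 → e' ∈ A := by
      rintro j A hA v ⟨eb, hebA, hveb⟩ e' hve' hnz
      obtain ⟨j', A', hA', he'⟩ := hf0 e' hnz
      by_contra he'A
      by_cases hjj : j' = j
      · subst hjj
        have hAA : A' ≠ A := by
          rintro rfl; exact he'A he'
        exact hPdisj j' A' hA' A hA hAA v ⟨e', he', hve'⟩ ⟨eb, hebA, hveb⟩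
      · exact hdisjE j' j hjj v ⟨e', (hAmem j' e').2 ⟨A', hA', he'⟩, hve'⟩
          ⟨eb, (hAmem j eb).2 ⟨A, hA, hebA⟩, hveb⟩
    have hfrac : ∀ (g : Sym2 V → ℝ) (v : V) (j : Fin δ) (A : Finset (Sym2 V)), A ∈ P j →
        (∃ eb ∈ A, v ∈ eb) → (∀ e' ∈ A, g e' = f e') →
        (∀ e', v ∈ e' → e' ∉ A → g e' = 0) → fracDeg g v = 1 := by
      intro g v j A hA hex hagree hzero
      have hstep : fracDeg g v = ∑ e' ∈ A.filter (fun e => v ∈ e), f e' := by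
        unfold fracDeg
        have hsub : A.filter (fun e => v ∈ e) ⊆
            Finset.univ.filter (fun e : Sym2 V => v ∈ e) := by
          intro e he
          rcases Finset.mem_filter.1 he with ⟨-, h⟩
          exact Finset.mem_filter.2 ⟨Finset.mem_univ _, h⟩
        rw [← Finset.sum_subset hsub ?van]
        case van =>
          intro e he hnot
          rcases Finset.mem_filter.1 he with ⟨-, hve⟩
          apply hzero e hve
          intro heA
          exact hnot (Finset.mem_filter.2 ⟨heA, hve⟩)
        exact Finset.sum_congr rfl fun e he => hagree e (Finset.mem_filter.1 he).1
      rw [hstep]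
      rcases hPpieces j A hA with hs | ho
      · obtain ⟨e₀, rfl⟩ := hs
        obtain ⟨eb, heb, hveb⟩ := hex
        rw [Finset.mem_singleton] at heb
        subst heb
        have hfil : ({eb} : Finset (Sym2 V)).filter (fun e => v ∈ e) = {eb} := by
          rw [Finset.filter_singleton, if_pos hveb]
        rw [hfil, Finset.sum_singleton]
        exact hval1 j {eb} eb hA (Finset.mem_singleton_self _) ⟨eb, rfl⟩
      · obtain ⟨hc3, hvc, hdegA⟩ := oddCycleSet_props ho
        obtain ⟨eb, hebA, hveb⟩ := hex
        have hvA : v ∈ vertSet A := mem_vertSet.2 ⟨eb, hebA, hveb⟩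
        have hcard2 : (A.filter (fun e => v ∈ e)).card = 2 := hdegA v hvA
        have hconst : ∀ e ∈ A.filter (fun e => v ∈ e), f e = 1/2 :=
          fun e he => hval2 j A e hA (Finset.mem_filter.1 he).1 ho
        rw [Finset.sum_congr rfl hconst, Finset.sum_const, hcard2]
        norm_num
    refine ⟨f, ⟨hf01, ?_, ?_⟩, E', hne, hdisjE, ?_, ?_, ?_⟩
    · intro e he
      by_contra hne0
      obtain ⟨j, A, hA, heA⟩ := hf0 e hne0
      exact he (hsubE j ((hAmem j e).2 ⟨A, hA, heA⟩))
    · intro v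
      obtain ⟨j, e, heE, hve⟩ := hcover v
      obtain ⟨A, hA, heA⟩ := (hAmem j e).1 heE
      refine hfrac f v j A hA ⟨e, heA, hve⟩ (fun _ _ => rfl) ?_
      intro e' hve' he'A
      by_contra hne0
      exact he'A (honly j A hA v ⟨e, heA, hve⟩ e' hve' hne0)
    · intro j e he
      obtain ⟨A, hA, heA⟩ := (hAmem j e).1 he
      exact Finset.mem_filter.2 ⟨Finset.mem_univ _, hfpos j A e hA heA⟩
    · intro e he
      have hne0 : f e ≠ 0 := ne_of_gt (Finset.mem_filter.1 he).2
      obtain ⟨j, A, hA, heA⟩ := hf0 e hne0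
      exact ⟨j, (hAmem j e).2 ⟨A, hA, heA⟩⟩
    · intro j
      set fj : Sym2 V → ℝ := fun e => if e ∈ E' j then f e else 0 with hfjd
      have hdegfj : ∀ v ∈ vertSet (E' j), fracDeg fj v = 1 := by
        intro v hv
        rcases mem_vertSet.1 hv with ⟨eb, hebE, hveb⟩
        obtain ⟨A, hA, hebA⟩ := (hAmem j eb).1 hebE
        refine hfrac fj v j A hA ⟨eb, hebA, hveb⟩ ?_ ?_
        · intro e' he'
          simp only [hfjd]
          rw [if_pos ((hAmem j e').2 ⟨A, hA, he'⟩)]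
        · intro e' hve' he'A
          simp only [hfjd]
          by_cases heE' : e' ∈ E' j
          · rw [if_pos heE']
            by_contra hne0
            exact he'A (honly j A hA v ⟨eb, hebA, hveb⟩ e' hve' hne0)
          · rw [if_neg heE']
      have hcond : ∀ e : Sym2 V, fj e ≠ 0 → ¬ e.IsDiag ∧ ∀ v ∈ e, v ∈ vertSet (E' j) := by
        intro e hne0
        have heE : e ∈ E' j := by
          by_contra h
          apply hne0
          simp only [hfjd]
          rw [if_neg h]
        exact ⟨hdiagE j e heE, fun v hv => mem_vertSet.2 ⟨e, heE, hv⟩⟩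
      have hhs := handshake_real hcond
      have hL : ∑ v ∈ vertSet (E' j), fracDeg fj v = ((vertSet (E' j)).card : ℝ) := by
        rw [Finset.sum_congr rfl hdegfj, Finset.sum_const, nsmul_eq_mul, mul_one]
      have hR : ∑ e : Sym2 V, fj e = ∑ e ∈ E' j, f e := by
        rw [← Finset.sum_subset (Finset.subset_univ (E' j))
          (fun e _ he => by simp only [hfjd]; rw [if_neg he])]
        refine Finset.sum_congr rfl fun e he => ?_
        simp only [hfjd]; rw [if_pos he]
      rw [hL, hR, hcardE j] at hhs
      have hgoal : ∑ e ∈ E' j, f e = ((Fintype.card V : ℝ) / δ) / 2 := by linarith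
      rw [hgoal, div_div, mul_comm]
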